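/- Proposition (SRI vs. symmetrized reference-invariant GE, case α < 1): for every real α with α < 1 and α ≠ 0, α·SR_α(p̄, q̄) ≥ α·SD_α(p̄, q̄), where p̄_j = p_j/Σ_k p_k, q̄_j = q_j/Σ_k q_k, and r̄_j = q̄_j/p̄_j. -/

import Mathlib

/-- Symmetrized Rényi index on the normalized distributions
`p̄_j = p_j/Σ p`, `q̄_j = q_j/Σ q`, `r̄_j = q̄_j/p̄_j`:
`SR_α(p̄,q̄) = −(1/(2α(1−α)))·ln[(Σ_j p̄_j r̄_j^{1−α})·(Σ_j p̄_j r̄_j^{α})]`. -/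
noncomputable def symRenyiBar (m : ℕ) (α : ℝ) (p q : Fin m → ℝ) : ℝ :=
  -(1 / (2 * α * (1 - α))) *
    Real.log
      ((∑ j, (p j / ∑ k, p k) * ((q j / ∑ k, q k) / (p j / ∑ k, p k)) ^ (1 - α)) *
       (∑ j, (p j / ∑ k, p k) * ((q j / ∑ k, q k) / (p j / ∑ k, p k)) ^ α))

/-- Symmetrized reference-invariant GE index on the normalized distributions:
`SD_α(p̄,q̄) = (1/(α(1−α))) · [1 − (1/2) Σ_j p̄_j (r̄_j^{1−α} + r̄_j^{α})]`. -/
noncomputable def symGEBar (m : ℕ) (α : ℝ) (p q : Fin m → ℝ) : ℝ :=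
  (1 / (α * (1 - α))) *
    (1 - (1 / 2) * ∑ j, (p j / ∑ k, p k) *
      (((q j / ∑ k, q k) / (p j / ∑ k, p k)) ^ (1 - α) +
       ((q j / ∑ k, q k) / (p j / ∑ k, p k)) ^ α))

/-- SRI vs. symmetrized reference-invariant GE, case `α < 1`, `α ≠ 0`:
`α·SR_α(p̄,q̄) ≥ α·SD_α(p̄,q̄)`. -/
theorem symRenyiBar_ge_symGEBar (m : ℕ) (hm : 1 ≤ m) (p q : Fin m → ℝ)
    (hp : ∀ j, 0 < p j) (hq : ∀ j, 0 < q j)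
    (α : ℝ) (hα : α < 1) (hα0 : α ≠ 0) :
    α * symGEBar m α p q ≤ α * symRenyiBar m α p q := by
  have hne : (Finset.univ : Finset (Fin m)).Nonempty := ⟨⟨0, by omega⟩, Finset.mem_univ _⟩
  have hS : 0 < ∑ k, p k := Finset.sum_pos (fun k _ => hp k) hne
  have hT : 0 < ∑ k, q k := Finset.sum_pos (fun k _ => hq k) hne
  have hr : ∀ j, 0 < (q j / ∑ k, q k) / (p j / ∑ k, p k) := fun j =>
    div_pos (div_pos (hq j) hT) (div_pos (hp j) hS)
  unfold symGEBar symRenyiBar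
  set A := ∑ j, (p j / ∑ k, p k) * ((q j / ∑ k, q k) / (p j / ∑ k, p k)) ^ (1 - α) with hA
  set B := ∑ j, (p j / ∑ k, p k) * ((q j / ∑ k, q k) / (p j / ∑ k, p k)) ^ α with hB
  have hApos : 0 < A := Finset.sum_pos
    (fun j _ => mul_pos (div_pos (hp j) hS) (Real.rpow_pos_of_pos (hr j) _)) hne
  have hBpos : 0 < B := Finset.sum_pos
    (fun j _ => mul_pos (div_pos (hp j) hS) (Real.rpow_pos_of_pos (hr j) _)) hne
  have hsum : (∑ j, (p j / ∑ k, p k) *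
      (((q j / ∑ k, q k) / (p j / ∑ k, p k)) ^ (1 - α) +
       ((q j / ∑ k, q k) / (p j / ∑ k, p k)) ^ α)) = A + B := by
    rw [hA, hB, ← Finset.sum_add_distrib]
    exact Finset.sum_congr rfl (fun j _ => by ring)
  rw [hsum, Real.log_mul (ne_of_gt hApos) (ne_of_gt hBpos)]
  have hlA : Real.log A ≤ A - 1 := Real.log_le_sub_one_of_pos hApos
  have hlB : Real.log B ≤ B - 1 := Real.log_le_sub_one_of_pos hBpos
  have h1α : (0:ℝ) < 1 - α := by linarith
  have key : 1 - 1/2 * (A + B) ≤ -(1/2) * (Real.log A + Real.log B) := by linarith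
  have hL : α * (1 / (α * (1 - α)) * (1 - 1/2 * (A + B)))
      = (1 - 1/2 * (A + B)) / (1 - α) := by
    field_simp
  have hR : α * (-(1 / (2 * α * (1 - α))) * (Real.log A + Real.log B))
      = (-(1/2) * (Real.log A + Real.log B)) / (1 - α) := by
    field_simp
  rw [hL, hR]
  exact div_le_div_of_nonneg_right key h1α.le
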